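/- Let m, n ≥ 1, let t_0, …, t_{n−1} ∈ ℂ be pairwise distinct, and let s_0, …, s_{m−1} ∈ ℂ satisfy s_i ≠ t_j for all i, j. Set l(x) = ∏_{j=0}^{n−1}(x − t_j) and let l′ be its derivative. Then the n×n Vandermonde matrix V_t is invertible, l(s_i) ≠ 0 for all i, and C_{s,t} = diag(l(s_i)^{−1})_{i=0}^{m−1} · V_s · V_t^{−1} · diag(l′(t_j))_{j=0}^{n−1}, where V_s is the m×n Vandermonde matrix and C_{s,t} = (1/(s_i − t_j))_{0≤i<m, 0≤j<n} is the m×n Cauchy matrix. -/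

import Mathlib

open Polynomial Matrix Finset

lemma cv_nodal_eq (n : ℕ) (t : Fin n → ℂ) (l : Polynomial ℂ)
    (hl : l = ∏ j, (X - C (t j))) : l = Lagrange.nodal Finset.univ t := by
  rw [hl, Lagrange.nodal]

lemma cv_key (n : ℕ) (t : Fin n → ℂ) (ht : Function.Injective t)
    (x : ℂ) (hx : ∀ j, x ≠ t j) (p : ℕ) (hp : p < n)
    (l : Polynomial ℂ) (hl : l = ∏ j, (X - C (t j))) :
    ∑ k, (x - t k)⁻¹ * ((derivative l).eval (t k))⁻¹ * (t k) ^ p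
      = (l.eval x)⁻¹ * x ^ p := by
  have hnod := cv_nodal_eq n t l hl
  have hinj : Set.InjOn t (Finset.univ : Finset (Fin n)) := ht.injOn
  have hlx : l.eval x ≠ 0 := by
    rw [hl]
    simp only [eval_prod, eval_sub, eval_X, eval_C]
    exact Finset.prod_ne_zero_iff.2 fun j _ => sub_ne_zero_of_ne (hx j)
  have hdeg : (X ^ p : ℂ[X]).degree < #(Finset.univ : Finset (Fin n)) := by
    simpa [Polynomial.degree_X_pow] using (by exact_mod_cast hp : (p : WithBot ℕ) < n)
  have hinterp := Lagrange.eq_interpolate (f := (X ^ p : ℂ[X])) hinj hdeg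
  have heval := Lagrange.eval_interpolate_not_at_node
      (s := (Finset.univ : Finset (Fin n))) (v := t) (x := x)
      (fun k => eval (t k) (X ^ p : ℂ[X])) (fun i _ => hx i)
  rw [← hinterp] at heval
  simp only [eval_pow, eval_X, ← hnod] at heval
  have hw : ∀ k : Fin n, Lagrange.nodalWeight Finset.univ t k
      = ((derivative l).eval (t k))⁻¹ := by
    intro k
    rw [Lagrange.nodalWeight_eq_eval_derivative_nodal (mem_univ k), hnod]
  rw [heval, inv_mul_cancel_left₀ hlx]
  refine Finset.sum_congr rfl fun k _ => ?_
  rw [hw k]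
  ring

theorem cauchy_vandermonde_link (m n : ℕ) (hm : 1 ≤ m) (hn : 1 ≤ n)
    (t : Fin n → ℂ) (ht : Function.Injective t)
    (s : Fin m → ℂ) (hst : ∀ i j, s i ≠ t j)
    (l : Polynomial ℂ) (hl : l = ∏ j, (Polynomial.X - Polynomial.C (t j))) :
    IsUnit (Matrix.vandermonde t) ∧ (∀ i, l.eval (s i) ≠ 0) ∧
      (Matrix.of fun (i : Fin m) (j : Fin n) => (s i - t j)⁻¹) =
        Matrix.diagonal (fun i => (l.eval (s i))⁻¹) *
          (Matrix.of fun (i : Fin m) (j : Fin n) => s i ^ (j : ℕ)) *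
          (Matrix.vandermonde t)⁻¹ *
          Matrix.diagonal (fun j => (Polynomial.derivative l).eval (t j)) := by
  have hdet : (Matrix.vandermonde t).det ≠ 0 :=
    (Matrix.det_vandermonde_ne_zero_iff).2 ht
  have hVt : IsUnit (Matrix.vandermonde t) :=
    (Matrix.isUnit_iff_isUnit_det _).2 (isUnit_iff_ne_zero.2 hdet)
  have hls : ∀ i, l.eval (s i) ≠ 0 := by
    intro i
    rw [hl]
    simp only [eval_prod, eval_sub, eval_X, eval_C]
    exact Finset.prod_ne_zero_iff.2 fun j _ => sub_ne_zero_of_ne (hst i j)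
  have hld : ∀ k, (derivative l).eval (t k) ≠ 0 := by
    intro k
    have hnod := cv_nodal_eq n t l hl
    rw [hnod, Lagrange.eval_nodal_derivative_eval_node_eq (mem_univ k),
      Lagrange.eval_nodal]
    exact Finset.prod_ne_zero_iff.2 fun j hj =>
      sub_ne_zero_of_ne fun h => (Finset.mem_erase.1 hj).1 (ht h.symm)
  refine ⟨hVt, hls, ?_⟩
  -- key: C * diag((l')⁻¹) * V_t = diag(l(s)⁻¹) * V_s
  have hmain :
      (Matrix.of fun (i : Fin m) (j : Fin n) => (s i - t j)⁻¹) *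
        Matrix.diagonal (fun k => ((derivative l).eval (t k))⁻¹) *
        Matrix.vandermonde t =
      Matrix.diagonal (fun i => (l.eval (s i))⁻¹) *
        (Matrix.of fun (i : Fin m) (j : Fin n) => s i ^ (j : ℕ)) := by
    ext i j
    rw [Matrix.mul_apply, Matrix.diagonal_mul, Matrix.of_apply]
    simp only [Matrix.mul_diagonal, Matrix.of_apply, Matrix.vandermonde_apply]
    exact cv_key n t ht (s i) (hst i) j j.isLt l hl
  calc (Matrix.of fun (i : Fin m) (j : Fin n) => (s i - t j)⁻¹)
      = (Matrix.of fun (i : Fin m) (j : Fin n) => (s i - t j)⁻¹) *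
          (Matrix.diagonal (fun k => ((derivative l).eval (t k))⁻¹) *
           Matrix.vandermonde t * (Matrix.vandermonde t)⁻¹ *
           Matrix.diagonal (fun j => (derivative l).eval (t j))) := by
        rw [Matrix.mul_assoc (Matrix.diagonal _) (Matrix.vandermonde t),
          Matrix.mul_nonsing_inv _ (isUnit_iff_ne_zero.2 hdet), Matrix.mul_one,
          Matrix.diagonal_mul_diagonal]
        simp only [fun k => inv_mul_cancel₀ (hld k)]
        rw [Matrix.diagonal_one, Matrix.mul_one]
    _ = _ := by
        rw [← Matrix.mul_assoc, ← Matrix.mul_assoc, ← Matrix.mul_assoc, hmain]
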